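/- Every F-admissible F-space X is admissible: for every compact subset K of X and every neighborhood V of 0 in X, there exists a continuous map H : K → X with dim(span[H(K)]) < ∞ and x − H(x) ∈ V for every x ∈ K. -/

import Mathlib

open MeasureTheory Filter Topology

/-- An *F-admissible F-space* `X ⊆ L₀(T)` of `W`-valued measurable functions on a
σ-finite measure space `(T, Σ, μ)` (Definition 3.2 of the paper):
a complete F-space containing all simple functions with support of finite measure,
whose F-norm is monotone under pointwise norm domination, and satisfying
conditions (d), (e), (f) of the definition. -/
structure FAdmissibleSpace {T : Type*} [MeasurableSpace T] (μ : Measure T)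
    (W : Type*) [NormedAddCommGroup W] [NormedSpace ℝ W] where
  /-- The carrier `X ⊆ L₀(T)`. -/
  carrier : Set (T → W)
  /-- The F-norm `|·|_F`. -/
  Fn : (T → W) → ℝ
  zero_mem : 0 ∈ carrier
  add_mem : ∀ f g, f ∈ carrier → g ∈ carrier → f + g ∈ carrier
  smul_mem : ∀ (c : ℝ) f, f ∈ carrier → c • f ∈ carrier
  /-- Members of `X` are (a.e. strongly) measurable, i.e. `X ⊆ L₀(T)`. -/
  measurable_mem : ∀ f ∈ carrier, AEStronglyMeasurable f μ
  Fn_nonneg : ∀ f, 0 ≤ Fn f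
  /-- F-norm axiom (i) (on `L₀`, i.e. up to a.e. equality). -/
  Fn_eq_zero : ∀ f ∈ carrier, (Fn f = 0 ↔ f =ᵐ[μ] 0)
  /-- F-norm axiom (ii). -/
  Fn_neg : ∀ f, Fn (-f) = Fn f
  /-- F-norm axiom (iii): triangle inequality. -/
  Fn_add : ∀ f g, Fn (f + g) ≤ Fn f + Fn g
  /-- F-norm axiom (iv): joint continuity of scalar multiplication. -/
  Fn_smul : ∀ (f : T → W) (fs : ℕ → T → W) (c : ℝ) (cs : ℕ → ℝ),
      Tendsto (fun n => Fn (fs n - f)) atTop (𝓝 0) → Tendsto cs atTop (𝓝 c) →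
      Tendsto (fun n => Fn (cs n • fs n - c • f)) atTop (𝓝 0)
  /-- (b): simple functions with support of finite measure belong to `X`. -/
  simple_mem : ∀ s : SimpleFunc T W, μ (Function.support s) < ⊤ → ⇑s ∈ carrier
  /-- (c): monotonicity of the F-norm under pointwise norm domination. -/
  mono : ∀ (f g : T → W), AEStronglyMeasurable f μ → g ∈ carrier →
      (∀ᵐ t ∂μ, ‖f t‖ ≤ ‖g t‖) → f ∈ carrier ∧ Fn f ≤ Fn g
  /-- (d): `‖wₙ‖ → 0` implies `|wₙ χ_A|_F → 0` for `μ A < ∞`. -/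
  tendsto_const_indicator : ∀ (w : ℕ → W) (A : Set T), MeasurableSet A → μ A < ⊤ →
      Tendsto (fun n => ‖w n‖) atTop (𝓝 0) →
      Tendsto (fun n => Fn (A.indicator fun _ => w n)) atTop (𝓝 0)
  /-- (e): `|w χ_{Aₙ}|_F → 0` iff `μ Aₙ → 0`, for `w ≠ 0`. -/
  indicator_tendsto_iff : ∀ (A : ℕ → Set T), (∀ n, MeasurableSet (A n)) → ∀ w : W, w ≠ 0 →
      (Tendsto (fun n => Fn ((A n).indicator fun _ => w)) atTop (𝓝 0) ↔
        Tendsto (fun n => μ (A n)) atTop (𝓝 0))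
  /-- (f): dominated a.e. convergence implies F-norm convergence. -/
  dominated : ∀ (f : T → W) (fs : ℕ → T → W), f ∈ carrier → (∀ n, fs n ∈ carrier) →
      (∀ᵐ t ∂μ, Tendsto (fun n => fs n t) atTop (𝓝 (f t))) →
      (∀ n t, ‖fs n t‖ ≤ ‖f t‖) →
      Tendsto (fun n => Fn (fs n - f)) atTop (𝓝 0)
  /-- Completeness: `X` is a Fréchet space for the metric induced by the F-norm. -/
  complete : ∀ fs : ℕ → T → W, (∀ n, fs n ∈ carrier) →
      (∀ ε : ℝ, 0 < ε → ∃ N, ∀ p q, N ≤ p → N ≤ q → Fn (fs p - fs q) < ε) →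
      ∃ f ∈ carrier, Tendsto (fun n => Fn (fs n - f)) atTop (𝓝 0)

/-- A set `Z ⊆ X` is compact for the metric induced by the F-norm
(stated sequentially, which is equivalent in metric spaces). -/
def FAdmissibleSpace.IsCompactSet {T : Type*} [MeasurableSpace T] {μ : Measure T}
    {W : Type*} [NormedAddCommGroup W] [NormedSpace ℝ W]
    (X : FAdmissibleSpace μ W) (Z : Set (T → W)) : Prop :=
  ∀ g : ℕ → T → W, (∀ n, g n ∈ Z) →
    ∃ f ∈ Z, ∃ φ : ℕ → ℕ, StrictMono φ ∧
      Tendsto (fun k => X.Fn (g (φ k) - f)) atTop (𝓝 0)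
namespace FAdmissibleSpace

variable {T : Type*} [MeasurableSpace T] {μ : Measure T}
  {W : Type*} [NormedAddCommGroup W] [NormedSpace ℝ W]
  (X : FAdmissibleSpace μ W)

lemma Fn_zero : X.Fn 0 = 0 :=
  (X.Fn_eq_zero 0 X.zero_mem).2 Filter.EventuallyEq.rfl

lemma sub_mem {f g : T → W} (hf : f ∈ X.carrier) (hg : g ∈ X.carrier) :
    f - g ∈ X.carrier := by
  have h : f - g = f + (-1 : ℝ) • g := by
    funext t; simp [sub_eq_add_neg]
  rw [h]; exact X.add_mem _ _ hf (X.smul_mem _ _ hg)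

lemma Fn_sub_le3 (f g h : T → W) : X.Fn (f - h) ≤ X.Fn (f - g) + X.Fn (g - h) := by
  have he : f - h = (f - g) + (g - h) := by abel
  rw [he]; exact X.Fn_add _ _

lemma Fn_sub_comm (f g : T → W) : X.Fn (f - g) = X.Fn (g - f) := by
  rw [← X.Fn_neg (g - f), neg_sub]

lemma abs_Fn_sub_le (f g h : T → W) : |X.Fn (f - h) - X.Fn (g - h)| ≤ X.Fn (f - g) := by
  rw [abs_le]
  constructor
  · have h1 := X.Fn_sub_le3 g f h
    have h2 : X.Fn (g - f) = X.Fn (f - g) := X.Fn_sub_comm g f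
    linarith
  · have h1 := X.Fn_sub_le3 f g h
    linarith

lemma Fn_sum_le {ι : Type*} (s : Finset ι) (g : ι → T → W) :
    X.Fn (∑ i ∈ s, g i) ≤ ∑ i ∈ s, X.Fn (g i) := by
  classical
  induction s using Finset.cons_induction with
  | empty => simp [X.Fn_zero]
  | cons a s ha ih =>
    rw [Finset.sum_cons, Finset.sum_cons]
    exact le_trans (X.Fn_add _ _) (by linarith)

/-- The splitting lemma: if `‖h‖ ≤ ‖a‖ + ‖b‖` pointwise a.e. with `a, b ∈ X`,
then `h ∈ X` and `|h|_F ≤ |a|_F + |b|_F`. -/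
lemma split {h a b : T → W} (hh : AEStronglyMeasurable h μ) (ha : a ∈ X.carrier)
    (hb : b ∈ X.carrier) (hle : ∀ᵐ t ∂μ, ‖h t‖ ≤ ‖a t‖ + ‖b t‖) :
    h ∈ X.carrier ∧ X.Fn h ≤ X.Fn a + X.Fn b := by
  classical
  set v : T → W := fun t => (min ‖h t‖ ‖b t‖ / ‖h t‖) • h t with hv
  have hbm : AEStronglyMeasurable b μ := X.measurable_mem b hb
  have hvm : AEStronglyMeasurable v μ := by
    have h1 : AEMeasurable (fun t => min ‖h t‖ ‖b t‖ / ‖h t‖) μ :=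
      (hh.norm.aemeasurable.min hbm.norm.aemeasurable).div hh.norm.aemeasurable
    exact AEStronglyMeasurable.smul (aestronglyMeasurable_iff_aemeasurable.2 h1) hh
  have key : ∀ t, ‖h t‖ ≤ ‖a t‖ + ‖b t‖ → ‖v t‖ ≤ ‖b t‖ ∧ ‖h t - v t‖ ≤ ‖a t‖ := by
    intro t ht
    rcases eq_or_ne (h t) 0 with h0 | h0
    · constructor <;> simp [hv, h0]
    · have hr : 0 < ‖h t‖ := norm_pos_iff.2 h0
      have hm0 : 0 ≤ min ‖h t‖ ‖b t‖ := le_min hr.le (norm_nonneg _)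
      have hc0 : 0 ≤ min ‖h t‖ ‖b t‖ / ‖h t‖ := div_nonneg hm0 hr.le
      have hc1 : min ‖h t‖ ‖b t‖ / ‖h t‖ ≤ 1 := (div_le_one hr).2 (min_le_left _ _)
      have hvn : ‖v t‖ = min ‖h t‖ ‖b t‖ := by
        rw [hv]
        simp only [norm_smul, Real.norm_eq_abs, abs_of_nonneg hc0]
        field_simp
      have huv : h t - v t = (1 - min ‖h t‖ ‖b t‖ / ‖h t‖) • h t := by
        rw [hv]; rw [sub_smul, one_smul]
      have hun : ‖h t - v t‖ = ‖h t‖ - min ‖h t‖ ‖b t‖ := by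
        rw [huv, norm_smul, Real.norm_eq_abs, abs_of_nonneg (by linarith)]
        field_simp
      constructor
      · rw [hvn]; exact min_le_right _ _
      · rw [hun]
        rcases le_total ‖h t‖ ‖b t‖ with hcase | hcase
        · rw [min_eq_left hcase]; simpa using norm_nonneg (a t)
        · rw [min_eq_right hcase]; linarith
  have hv2 := X.mono v b hvm hb (hle.mono fun t ht => (key t ht).1)
  have hu2 := X.mono (h - v) a (hh.sub hvm) ha (hle.mono fun t ht => (key t ht).2)
  have hsum : (h - v) + v = h := sub_add_cancel h v
  constructor
  · have := X.add_mem _ _ hu2.1 hv2.1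
    rwa [hsum] at this
  · calc X.Fn h = X.Fn ((h - v) + v) := by rw [hsum]
    _ ≤ X.Fn (h - v) + X.Fn v := X.Fn_add _ _
    _ ≤ X.Fn a + X.Fn b := add_le_add hu2.2 hv2.2

end FAdmissibleSpace
namespace FAdmissibleSpace

variable {W : Type*} [NormedAddCommGroup W] [NormedSpace ℝ W]

/-- Radial truncation at level `M`. -/
noncomputable def trunc (M : ℝ) (x : W) : W := min 1 (M / ‖x‖) • x

lemma trunc_eq_self {M : ℝ} {x : W} (hx : ‖x‖ ≤ M) : trunc M x = x := by
  rcases eq_or_ne x 0 with rfl | h0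
  · simp [trunc]
  · have hr : 0 < ‖x‖ := norm_pos_iff.2 h0
    have : (1 : ℝ) ≤ M / ‖x‖ := (one_le_div hr).2 hx
    rw [trunc, min_eq_left this, one_smul]

lemma norm_trunc_le_norm {M : ℝ} (hM : 0 ≤ M) (x : W) : ‖trunc M x‖ ≤ ‖x‖ := by
  have h0 : 0 ≤ M / ‖x‖ := div_nonneg hM (norm_nonneg _)
  have h1 : min 1 (M / ‖x‖) ≤ 1 := min_le_left _ _
  rw [trunc, norm_smul, Real.norm_eq_abs, abs_of_nonneg (le_min zero_le_one h0)]
  nlinarith [norm_nonneg x]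

lemma norm_trunc_le {M : ℝ} (hM : 0 ≤ M) (x : W) : ‖trunc M x‖ ≤ M := by
  rcases le_or_gt ‖x‖ M with hc | hc
  · exact le_trans (norm_trunc_le_norm hM x) hc
  · have hr : 0 < ‖x‖ := lt_of_le_of_lt hM hc
    have hle : M / ‖x‖ ≤ 1 := (div_le_one hr).2 hc.le
    rw [trunc, min_eq_right hle, norm_smul, Real.norm_eq_abs,
      abs_of_nonneg (div_nonneg hM hr.le)]
    field_simp
    exact le_rfl

lemma norm_sub_trunc {M : ℝ} (hM : 0 ≤ M) (x : W) :
    ‖x - trunc M x‖ = max 0 (‖x‖ - M) := by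
  rcases le_or_gt ‖x‖ M with hc | hc
  · rw [trunc_eq_self hc, sub_self, norm_zero, max_eq_left (by linarith)]
  · have hr : 0 < ‖x‖ := lt_of_le_of_lt hM hc
    have hle : M / ‖x‖ ≤ 1 := (div_le_one hr).2 hc.le
    have h1 : x - trunc M x = (1 - M / ‖x‖) • x := by
      rw [trunc, min_eq_right hle, sub_smul, one_smul]
    rw [h1, norm_smul, Real.norm_eq_abs, abs_of_nonneg (by linarith),
      max_eq_right (by linarith)]
    field_simp

private lemma trunc_lip_aux {M : ℝ} (hM : 0 ≤ M) {x y : W} (hyx : ‖y‖ ≤ ‖x‖) :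
    ‖trunc M x - trunc M y‖ ≤ 2 * ‖x - y‖ := by
  rcases eq_or_ne y 0 with rfl | hy0
  · rw [show trunc M (0 : W) = 0 by simp [trunc], sub_zero, sub_zero]
    calc ‖trunc M x‖ ≤ ‖x‖ := norm_trunc_le_norm hM x
    _ ≤ 2 * ‖x‖ := by nlinarith [norm_nonneg x]
  · have hs : 0 < ‖y‖ := norm_pos_iff.2 hy0
    have hr : 0 < ‖x‖ := lt_of_lt_of_le hs hyx
    set a := min 1 (M / ‖x‖) with hadef
    set b := min 1 (M / ‖y‖) with hbdef
    have hdiv : M / ‖x‖ ≤ M / ‖y‖ := div_le_div_of_nonneg_left hM hs hyx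
    have hab : a ≤ b := min_le_min le_rfl hdiv
    have ha0 : 0 ≤ a := le_min zero_le_one (div_nonneg hM hr.le)
    have hb1 : b ≤ 1 := min_le_left _ _
    have hb0 : 0 ≤ b := le_trans ha0 hab
    have hkey : (b - a) * ‖x‖ ≤ ‖x - y‖ := by
      rcases le_or_gt 1 (M / ‖x‖) with h1 | h1
      · have ha1 : a = 1 := min_eq_left h1
        have hb1' : b = 1 := le_antisymm hb1 (ha1 ▸ hab)
        rw [ha1, hb1']; simp [norm_nonneg]
      · have ha' : a = M / ‖x‖ := min_eq_right h1.le
        have haM : a * ‖x‖ = M := by rw [ha']; field_simp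
        have hbs : b * ‖y‖ ≤ M := by
          have : b ≤ M / ‖y‖ := min_le_right _ _
          calc b * ‖y‖ ≤ (M / ‖y‖) * ‖y‖ := by nlinarith
          _ = M := by field_simp
        have hns : ‖x‖ - ‖y‖ ≤ ‖x - y‖ := norm_sub_norm_le x y
        nlinarith
    have hdecomp : trunc M x - trunc M y = b • (x - y) + (a - b) • x := by
      rw [trunc, trunc, ← hadef, ← hbdef, smul_sub, sub_smul]
      abel
    calc ‖trunc M x - trunc M y‖ ≤ ‖b • (x - y)‖ + ‖(a - b) • x‖ := by
          rw [hdecomp]; exact norm_add_le _ _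
    _ = b * ‖x - y‖ + (b - a) * ‖x‖ := by
        rw [norm_smul, norm_smul, Real.norm_eq_abs, Real.norm_eq_abs,
          abs_of_nonneg hb0, abs_of_nonpos (by linarith), neg_sub]
    _ ≤ 1 * ‖x - y‖ + ‖x - y‖ := by
        have := norm_nonneg (x - y)
        nlinarith
    _ = 2 * ‖x - y‖ := by ring

lemma trunc_lipschitz {M : ℝ} (hM : 0 ≤ M) (x y : W) :
    ‖trunc M x - trunc M y‖ ≤ 2 * ‖x - y‖ := by
  rcases le_total ‖y‖ ‖x‖ with hc | hc
  · exact trunc_lip_aux hM hc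
  · rw [norm_sub_rev, norm_sub_rev x y]
    exact trunc_lip_aux hM hc

lemma trunc_continuous {M : ℝ} (hM : 0 < M) : Continuous (trunc (W := W) M) := by
  rw [continuous_iff_continuousAt]
  intro x
  rcases eq_or_ne x 0 with rfl | hx
  · have hev : trunc (W := W) M =ᶠ[nhds (0 : W)] id := by
      filter_upwards [Metric.ball_mem_nhds (0 : W) hM] with y hy
      exact trunc_eq_self (le_of_lt (mem_ball_zero_iff.1 hy))
    exact continuousAt_id.congr hev.symm
  · have hn : ‖x‖ ≠ 0 := norm_ne_zero_iff.2 hx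
    exact (continuousAt_const.min
      (continuousAt_const.div continuous_norm.continuousAt hn)).smul continuousAt_id

end FAdmissibleSpace
namespace FAdmissibleSpace

variable {T : Type*} [MeasurableSpace T] {μ : Measure T}
  {W : Type*} [NormedAddCommGroup W] [NormedSpace ℝ W]
  (X : FAdmissibleSpace μ W)

lemma indicator_mem {A : Set T} (hA : MeasurableSet A) (hAfin : μ A < ⊤) (w : W) :
    A.indicator (fun _ => w) ∈ X.carrier := by
  classical
  have hcoe : ⇑(SimpleFunc.piecewise A hA (SimpleFunc.const T w)
      (SimpleFunc.const T 0)) = A.indicator (fun _ => w) := by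
    funext t
    by_cases ht : t ∈ A <;>
      simp [Set.indicator, ht, SimpleFunc.coe_piecewise, Set.piecewise]
  have hsupp : μ (Function.support ⇑(SimpleFunc.piecewise A hA (SimpleFunc.const T w)
      (SimpleFunc.const T 0))) < ⊤ := by
    refine lt_of_le_of_lt (measure_mono ?_) hAfin
    rw [hcoe]
    exact Set.support_indicator_subset
  have := X.simple_mem _ hsupp
  rwa [hcoe] at this

lemma totallyBounded {K : Set (T → W)} (hKc : X.IsCompactSet K) {r : ℝ} (hr : 0 < r) :
    ∃ s : Finset (T → W), ↑s ⊆ K ∧ ∀ f ∈ K, ∃ g ∈ s, X.Fn (f - g) < r := by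
  classical
  by_contra hcon
  push_neg at hcon
  choose F hFK hFr using hcon
  set S : ℕ → {s : Finset (T → W) // ↑s ⊆ K} :=
    fun n => Nat.rec ⟨∅, by simp⟩
      (fun _ p => ⟨insert (F p.1 p.2) p.1,
        by rw [Finset.coe_insert]; exact Set.insert_subset (hFK p.1 p.2) p.2⟩) n with hS
  set g : ℕ → T → W := fun n => F (S n).1 (S n).2 with hg
  have hmem : ∀ n, g n ∈ K := fun n => hFK _ _
  have hsucc : ∀ n, (S (n + 1)).1 = insert (g n) (S n).1 := fun n => rfl
  have hSmono : ∀ i j, i ≤ j → (S i).1 ⊆ (S j).1 := by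
    intro i j hij
    induction hij with
    | refl => exact subset_rfl
    | @step j' h ih =>
      exact ih.trans (by rw [hsucc j']; exact Finset.subset_insert _ _)
  have hgi : ∀ i n, i < n → g i ∈ (S n).1 := by
    intro i n hin
    have h1 : g i ∈ (S (i + 1)).1 := by rw [hsucc i]; exact Finset.mem_insert_self _ _
    exact hSmono (i + 1) n hin h1
  have hsep : ∀ i n, i < n → r ≤ X.Fn (g n - g i) := fun i n h =>
    hFr (S n).1 (S n).2 _ (hgi i n h)
  obtain ⟨f, hfK, φ, hφ, hconv⟩ := hKc g hmem
  have h2 : ∀ᶠ k in Filter.atTop, X.Fn (g (φ k) - f) < r / 2 :=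
    hconv.eventually_lt_const (by linarith)
  obtain ⟨N, hN⟩ := Filter.eventually_atTop.1 h2
  have hlt : r < r := by
    calc r ≤ X.Fn (g (φ (N + 1)) - g (φ N)) := hsep _ _ (hφ (Nat.lt_succ_self N))
    _ ≤ X.Fn (g (φ (N + 1)) - f) + X.Fn (f - g (φ N)) := X.Fn_sub_le3 _ _ _
    _ = X.Fn (g (φ (N + 1)) - f) + X.Fn (g (φ N) - f) := by rw [X.Fn_sub_comm f]
    _ < r / 2 + r / 2 := add_lt_add (hN _ (Nat.le_succ N)) (hN N le_rfl)
    _ = r := by ring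
  exact absurd hlt (lt_irrefl r)

end FAdmissibleSpace
namespace FAdmissibleSpace

variable {T : Type*} [MeasurableSpace T] {μ : Measure T}
  {W : Type*} [NormedAddCommGroup W] [NormedSpace ℝ W]
  (X : FAdmissibleSpace μ W)

/-- Membership in the carrier of indicator restrictions. -/
lemma indicator_restrict_mem {f : T → W} (hf : f ∈ X.carrier) {B : Set T}
    (hB : MeasurableSet B) : B.indicator f ∈ X.carrier ∧ X.Fn (B.indicator f) ≤ X.Fn f :=
  X.mono _ f ((X.measurable_mem f hf).indicator hB) hf
    (Filter.Eventually.of_forall fun t => norm_indicator_le_norm_self f t)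

/-- Step A: a single finite-measure set catching all of a compact set up to `ε`. -/
lemma exists_tailSet [SigmaFinite μ] {K : Set (T → W)} (hK : K ⊆ X.carrier)
    (hKc : X.IsCompactSet K) {ε : ℝ} (hε : 0 < ε) :
    ∃ n : ℕ, ∀ f ∈ K, X.Fn ((spanningSets μ n)ᶜ.indicator f) < ε := by
  by_contra hcon
  push_neg at hcon
  choose f hfK hfe using hcon
  obtain ⟨f₀, hf₀K, φ, hφ, hconv⟩ := hKc f hfK
  have hf₀c : f₀ ∈ X.carrier := hK hf₀K
  set B : ℕ → Set T := fun k => (spanningSets μ (φ k))ᶜ with hB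
  have hBmeas : ∀ k, MeasurableSet (B k) := fun k =>
    (measurableSet_spanningSets μ (φ k)).compl
  have hfs_mem : ∀ k, (spanningSets μ (φ k)).indicator f₀ ∈ X.carrier := fun k =>
    (X.indicator_restrict_mem hf₀c (measurableSet_spanningSets μ (φ k))).1
  have hBmem : ∀ k, (B k).indicator f₀ ∈ X.carrier := fun k =>
    (X.indicator_restrict_mem hf₀c (hBmeas k)).1
  have hdom := X.dominated f₀ (fun k => (spanningSets μ (φ k)).indicator f₀) hf₀c hfs_mem
    ?_ ?_
  · have heq : ∀ k, (spanningSets μ (φ k)).indicator f₀ - f₀ = -((B k).indicator f₀) := by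
      intro k; funext t
      by_cases h : t ∈ spanningSets μ (φ k) <;> simp [Set.indicator, hB, h]
    have hts : Filter.Tendsto (fun k => X.Fn ((B k).indicator f₀)) Filter.atTop (𝓝 0) := by
      have hdom2 := hdom
      simp only [heq, X.Fn_neg] at hdom2
      exact hdom2
    have hbound : ∀ k, ε ≤ X.Fn (f (φ k) - f₀) + X.Fn ((B k).indicator f₀) := by
      intro k
      have hsplit := X.split (h := (B k).indicator (f (φ k)))
        ((X.measurable_mem _ (hK (hfK (φ k)))).indicator (hBmeas k))
        (X.sub_mem (hK (hfK (φ k))) hf₀c) (hBmem k) ?_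
      · exact le_trans (hfe (φ k)) hsplit.2
      · refine Filter.Eventually.of_forall fun t => ?_
        by_cases ht : t ∈ B k
        · simp only [Set.indicator_of_mem ht, Pi.sub_apply]
          calc ‖f (φ k) t‖ = ‖(f (φ k) t - f₀ t) + f₀ t‖ := by rw [sub_add_cancel]
          _ ≤ ‖f (φ k) t - f₀ t‖ + ‖f₀ t‖ := norm_add_le _ _
        · simp only [Set.indicator_of_notMem ht, norm_zero]
          positivity
    have hsum : Filter.Tendsto (fun k => X.Fn (f (φ k) - f₀) + X.Fn ((B k).indicator f₀))
        Filter.atTop (𝓝 0) := by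
      have := hconv.add hts
      simpa using this
    obtain ⟨k, hk⟩ := (hsum.eventually_lt_const hε).exists
    exact absurd (hbound k) (not_le.2 hk)
  · refine Filter.Eventually.of_forall fun t => ?_
    obtain ⟨n₀, hn₀⟩ : ∃ n₀, t ∈ spanningSets μ n₀ := by
      have : t ∈ ⋃ i, spanningSets μ i := by
        rw [iUnion_spanningSets]; trivial
      exact Set.mem_iUnion.1 this
    refine Filter.Tendsto.congr' ?_ tendsto_const_nhds
    filter_upwards [Filter.eventually_ge_atTop n₀] with k hk
    have ht : t ∈ spanningSets μ (φ k) :=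
      monotone_spanningSets μ (le_trans hk (hφ.le_apply)) hn₀
    rw [Set.indicator_of_mem ht]
  · exact fun k t => norm_indicator_le_norm_self f₀ t

/-- Step B: a single truncation level for all of a compact set. -/
lemma exists_truncLevel {K : Set (T → W)} (hK : K ⊆ X.carrier) (hKc : X.IsCompactSet K)
    {ε : ℝ} (hε : 0 < ε) :
    ∃ M : ℝ, 1 ≤ M ∧ ∀ f ∈ K, X.Fn (f - fun t => trunc M (f t)) < ε := by
  by_contra hcon
  push_neg at hcon
  have hcon' : ∀ n : ℕ, ∃ f ∈ K, ε ≤ X.Fn (f - fun t => trunc ((n : ℝ) + 1) (f t)) := by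
    intro n
    obtain ⟨f, hfK, hfe⟩ := hcon ((n : ℝ) + 1) (le_add_of_nonneg_left (Nat.cast_nonneg n))
    exact ⟨f, hfK, hfe⟩
  choose f hfK hfe using hcon'
  obtain ⟨f₀, hf₀K, φ, hφ, hconv⟩ := hKc f hfK
  have hf₀c : f₀ ∈ X.carrier := hK hf₀K
  have hMpos : ∀ k : ℕ, (0 : ℝ) ≤ (φ k : ℝ) + 1 := fun k => by positivity
  -- truncations of f₀ converge to f₀ in F-norm
  have htr_mem : ∀ k, (fun t => trunc ((φ k : ℝ) + 1) (f₀ t)) ∈ X.carrier := by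
    intro k
    refine (X.mono _ f₀ ?_ hf₀c (Filter.Eventually.of_forall fun t =>
      norm_trunc_le_norm (hMpos k) (f₀ t))).1
    exact (trunc_continuous (by positivity)).comp_aestronglyMeasurable
      (X.measurable_mem f₀ hf₀c)
  have hb_mem : ∀ k, (f₀ - fun t => trunc ((φ k : ℝ) + 1) (f₀ t)) ∈ X.carrier := fun k =>
    X.sub_mem hf₀c (htr_mem k)
  have hdom := X.dominated f₀ (fun k t => trunc ((φ k : ℝ) + 1) (f₀ t)) hf₀c htr_mem
    ?_ (fun k t => norm_trunc_le_norm (hMpos k) (f₀ t))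
  · have hts : Filter.Tendsto
        (fun k => X.Fn (f₀ - fun t => trunc ((φ k : ℝ) + 1) (f₀ t))) Filter.atTop (𝓝 0) := by
      have heq : ∀ k, ((fun t => trunc ((φ k : ℝ) + 1) (f₀ t)) - f₀)
          = -(f₀ - fun t => trunc ((φ k : ℝ) + 1) (f₀ t)) := by
        intro k; funext t; simp
      have hdom2 := hdom
      simp only [heq, X.Fn_neg] at hdom2
      exact hdom2
    have hbound : ∀ k, ε ≤ X.Fn (f (φ k) - f₀)
        + X.Fn (f₀ - fun t => trunc ((φ k : ℝ) + 1) (f₀ t)) := by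
      intro k
      have hsplit := X.split (h := f (φ k) - fun t => trunc ((φ k : ℝ) + 1) (f (φ k) t))
        ?_ (X.sub_mem (hK (hfK (φ k))) hf₀c) (hb_mem k) ?_
      · exact le_trans (hfe (φ k)) hsplit.2
      · have hfm := X.measurable_mem _ (hK (hfK (φ k)))
        exact hfm.sub ((trunc_continuous (by positivity)).comp_aestronglyMeasurable hfm)
      · refine Filter.Eventually.of_forall fun t => ?_
        simp only [Pi.sub_apply]
        rw [norm_sub_trunc (hMpos k), norm_sub_trunc (hMpos k)]
        have h1 : ‖f (φ k) t‖ ≤ ‖f (φ k) t - f₀ t‖ + ‖f₀ t‖ := by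
          calc ‖f (φ k) t‖ = ‖(f (φ k) t - f₀ t) + f₀ t‖ := by rw [sub_add_cancel]
          _ ≤ _ := norm_add_le _ _
        refine max_le ?_ ?_
        · positivity
        · have h2 : (0 : ℝ) ≤ max 0 (‖f₀ t‖ - ((φ k : ℝ) + 1)) := le_max_left _ _
          have h3 : ‖f₀ t‖ - ((φ k : ℝ) + 1) ≤ max 0 (‖f₀ t‖ - ((φ k : ℝ) + 1)) :=
            le_max_right _ _
          have h4 : (0 : ℝ) ≤ ‖f (φ k) t - f₀ t‖ := norm_nonneg _
          linarith
    have hsum := hconv.add hts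
    rw [add_zero] at hsum
    obtain ⟨k, hk⟩ := (hsum.eventually_lt_const hε).exists
    exact absurd (hbound k) (not_le.2 hk)
  · refine Filter.Eventually.of_forall fun t => ?_
    obtain ⟨n₀, hn₀⟩ := exists_nat_ge ‖f₀ t‖
    refine Filter.Tendsto.congr' ?_ tendsto_const_nhds
    filter_upwards [Filter.eventually_ge_atTop n₀] with k hk
    have hc : (n₀ : ℝ) ≤ (φ k : ℝ) := by exact_mod_cast le_trans hk hφ.le_apply
    have hle : ‖f₀ t‖ ≤ (φ k : ℝ) + 1 := by linarith
    exact (trunc_eq_self hle).symm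

end FAdmissibleSpace
namespace FAdmissibleSpace

open scoped ENNReal

variable {T : Type*} [MeasurableSpace T] {μ : Measure T}
  {W : Type*} [NormedAddCommGroup W] [NormedSpace ℝ W]
  (X : FAdmissibleSpace μ W)

/-- Step C: quantitative version of condition (e), forward direction. -/
lemma exists_measure_bound {w : W} (hw : w ≠ 0) {ε : ℝ} (hε : 0 < ε) :
    ∃ η₀ : ℝ≥0∞, 0 < η₀ ∧ ∀ B : Set T, MeasurableSet B → μ B < η₀ →
      X.Fn (B.indicator fun _ => w) < ε := by
  by_contra hcon
  push_neg at hcon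
  have hcon' : ∀ n : ℕ, ∃ B : Set T, MeasurableSet B ∧ μ B < ((n : ℝ≥0∞) + 1)⁻¹ ∧
      ε ≤ X.Fn (B.indicator fun _ => w) := by
    intro n
    obtain ⟨B, h1, h2, h3⟩ := hcon ((n : ℝ≥0∞) + 1)⁻¹ (by simp)
    exact ⟨B, h1, h2, h3⟩
  choose B hBmeas hBlt hBge using hcon'
  have hμ : Filter.Tendsto (fun n => μ (B n)) Filter.atTop (𝓝 0) := by
    have hinv : Filter.Tendsto (fun n : ℕ => ((n : ℝ≥0∞) + 1)⁻¹) Filter.atTop (𝓝 0) :=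
      ENNReal.tendsto_inv_nat_nhds_zero.comp (Filter.tendsto_add_atTop_nat 1) |>.congr
        (fun n => by simp)
    exact tendsto_of_tendsto_of_tendsto_of_le_of_le tendsto_const_nhds hinv
      (fun n => zero_le) (fun n => (hBlt n).le)
  have hFn := (X.indicator_tendsto_iff B hBmeas w hw).2 hμ
  obtain ⟨n, hn⟩ := (hFn.eventually_lt_const hε).exists
  exact absurd (hBge n) (not_le.2 hn)

/-- Step D: uniform control of the measure of large-deviation sets by the F-norm. -/
lemma exists_Fn_measure_control {A : Set T} (hA : MeasurableSet A) {w₀ : W}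
    (hw₀ : ‖w₀‖ = 1) {β η : ℝ} (hβ : 0 < β) (hη : 0 < η) :
    ∃ δ' : ℝ, 0 < δ' ∧ ∀ g g' : T → W, g ∈ X.carrier → g' ∈ X.carrier →
      X.Fn (g - g') < δ' → μ {t | t ∈ A ∧ β < ‖g t - g' t‖} < ENNReal.ofReal η := by
  by_contra hcon
  push_neg at hcon
  have hcon' : ∀ n : ℕ, ∃ g g' : T → W, g ∈ X.carrier ∧ g' ∈ X.carrier ∧
      X.Fn (g - g') < 1 / ((n : ℝ) + 1) ∧
      ENNReal.ofReal η ≤ μ {t | t ∈ A ∧ β < ‖g t - g' t‖} := by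
    intro n
    obtain ⟨g, g', h1, h2, h3, h4⟩ := hcon (1 / ((n : ℝ) + 1)) (by positivity)
    exact ⟨g, g', h1, h2, h3, h4⟩
  choose g g' hg hg' hFn hμ using hcon'
  set h : ℕ → T → W := fun n => g n - g' n with hh
  have hhc : ∀ n, h n ∈ X.carrier := fun n => X.sub_mem (hg n) (hg' n)
  have hhm : ∀ n, AEStronglyMeasurable (h n) μ := fun n => X.measurable_mem _ (hhc n)
  set hhat : ℕ → T → W := fun n => (hhm n).mk (h n) with hhat_def
  have hhat_sm : ∀ n, StronglyMeasurable (hhat n) := fun n => (hhm n).stronglyMeasurable_mk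
  have hhat_eq : ∀ n, h n =ᵐ[μ] hhat n := fun n => (hhm n).ae_eq_mk
  set C : ℕ → Set T := fun n => A ∩ {t | β < ‖hhat n t‖} with hC
  have hCmeas : ∀ n, MeasurableSet (C n) := by
    intro n
    exact hA.inter (measurableSet_lt measurable_const ((hhat_sm n).norm.measurable))
  have hμC : ∀ n, ENNReal.ofReal η ≤ μ (C n) := by
    intro n
    refine le_trans (hμ n) (measure_mono_ae ?_)
    filter_upwards [hhat_eq n] with t ht
    intro htS
    refine Set.mem_inter htS.1 ?_
    simp only [Set.mem_setOf_eq]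
    rw [← ht]
    exact htS.2
  have hdomC : ∀ n, X.Fn ((C n).indicator fun _ => β • w₀) ≤ X.Fn (h n) := by
    intro n
    refine (X.mono _ (h n) ?_ (hhc n) ?_).2
    · exact (aestronglyMeasurable_const).indicator (hCmeas n)
    · filter_upwards [hhat_eq n] with t ht
      by_cases htC : t ∈ C n
      · rw [Set.indicator_of_mem htC, norm_smul, hw₀, Real.norm_eq_abs,
          abs_of_pos hβ, mul_one, ht]
        exact le_of_lt htC.2
      · rw [Set.indicator_of_notMem htC, norm_zero]
        positivity
  have hFnC : Filter.Tendsto (fun n => X.Fn ((C n).indicator fun _ => β • w₀))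
      Filter.atTop (𝓝 0) := by
    refine squeeze_zero (fun n => X.Fn_nonneg _) (fun n => le_trans (hdomC n) (hFn n).le) ?_
    exact tendsto_one_div_add_atTop_nhds_zero_nat
  have hμ0 := (X.indicator_tendsto_iff C hCmeas (β • w₀)
    (smul_ne_zero hβ.ne' (by intro hcon0; rw [hcon0, norm_zero] at hw₀; norm_num at hw₀))).1 hFnC
  obtain ⟨n, hn⟩ := (hμ0.eventually_lt_const (by simp [ENNReal.ofReal_pos, hη] :
    (0 : ℝ≥0∞) < ENNReal.ofReal η)).exists
  exact absurd (hμC n) (not_le.2 hn)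

end FAdmissibleSpace

set_option maxHeartbeats 1000000 in
open scoped ENNReal in
open FAdmissibleSpace in
/-- Theorem 4.1, the main theorem of the paper. Every F-admissible
F-space is admissible in the sense of Klee: for every compact `K ⊆ X` and every `ε > 0`
(neighborhoods of `0` in the metric induced by the F-norm being the balls), there is a
continuous map `H : K → X` with finite-dimensional span of its image such that
`|f − H(f)|_F < ε` for every `f ∈ K`. -/
theorem fAdmissibleSpace_admissible
    {T : Type*} [MeasurableSpace T] (μ : Measure T) [SigmaFinite μ]
    {W : Type*} [NormedAddCommGroup W] [NormedSpace ℝ W] [CompleteSpace W]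
    (X : FAdmissibleSpace μ W) :
    ∀ K : Set (T → W), K ⊆ X.carrier → X.IsCompactSet K →
      ∀ ε : ℝ, 0 < ε →
        ∃ H : (T → W) → (T → W),
          (∀ f ∈ K, H f ∈ X.carrier) ∧
          -- `H` is continuous on `K` for the metric induced by the F-norm:
          (∀ f ∈ K, ∀ fs : ℕ → T → W, (∀ n, fs n ∈ K) →
            Tendsto (fun n => X.Fn (fs n - f)) atTop (𝓝 0) →
            Tendsto (fun n => X.Fn (H (fs n) - H f)) atTop (𝓝 0)) ∧
          -- `span [H(K)]` is finite dimensional: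
          (∃ (m : ℕ) (v : Fin m → T → W),
            ∀ f ∈ K, H f ∈ Submodule.span ℝ (Set.range v)) ∧
          -- `f − H(f)` lies in the `ε`-neighborhood of `0`:
          (∀ f ∈ K, X.Fn (f - H f) < ε) := by

  intro K hK hKc ε hε
  classical
  rcases subsingleton_or_nontrivial W with hW | hW
  · -- degenerate case: `W = {0}`
    refine ⟨fun _ => 0, fun f _ => X.zero_mem, ?_, ⟨0, fun i => i.elim0,
      fun f _ => Submodule.zero_mem _⟩, ?_⟩
    · intro f _ fs _ _
      simpa [X.Fn_zero] using (tendsto_const_nhds :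
        Filter.Tendsto (fun _ : ℕ => (0 : ℝ)) Filter.atTop (𝓝 0))
    · intro f hf
      have hf0 : f = 0 := funext fun t => Subsingleton.elim _ _
      rw [sub_zero, hf0, X.Fn_zero]
      exact hε
  -- main case
  set ε₅ : ℝ := ε / 5 with hε₅def
  have hε₅ : 0 < ε₅ := by positivity
  -- unit vector
  obtain ⟨w', hw'⟩ := exists_ne (0 : W)
  set w₀ : W := ‖w'‖⁻¹ • w' with hw₀def
  have hw'n : ‖w'‖ ≠ 0 := norm_ne_zero_iff.2 hw'
  have hw₀ : ‖w₀‖ = 1 := by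
    rw [hw₀def, norm_smul, Real.norm_eq_abs, abs_of_nonneg (by positivity)]
    field_simp
  have hw₀ne : w₀ ≠ 0 := by
    intro hcon; rw [hcon, norm_zero] at hw₀; norm_num at hw₀
  -- Step A : finite-measure core
  obtain ⟨nA, hA_tail⟩ := X.exists_tailSet hK hKc hε₅
  set A : Set T := spanningSets μ nA with hAdef
  have hAmeas : MeasurableSet A := measurableSet_spanningSets μ nA
  have hAfin : μ A < ⊤ := measure_spanningSets_lt_top μ nA
  -- Step B : a uniform truncation level
  obtain ⟨M, hM1, hMtr⟩ := X.exists_truncLevel hK hKc hε₅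
  have hM0 : (0 : ℝ) < M := lt_of_lt_of_le one_pos hM1
  -- Step C : quantitative smallness from small measure
  obtain ⟨η₀, hη₀pos, hη₀⟩ := X.exists_measure_bound (μ := μ)
    (w := (2 * M) • w₀) (smul_ne_zero (by positivity) hw₀ne) hε₅
  set η₁ : ℝ≥0∞ := min η₀ 1 with hη₁def
  have hη₁pos : 0 < η₁ := lt_min hη₀pos zero_lt_one
  have hη₁top : η₁ ≠ ⊤ := ne_top_of_le_ne_top (by simp) (min_le_right _ _)
  -- the scale `lA` from condition (d)
  have hdnorm : Filter.Tendsto (fun n : ℕ => ‖(1 / ((n : ℝ) + 1)) • w₀‖)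
      Filter.atTop (𝓝 0) := by
    simp only [norm_smul, hw₀, mul_one, Real.norm_eq_abs]
    have habs : ∀ n : ℕ, |1 / ((n : ℝ) + 1)| = 1 / ((n : ℝ) + 1) := fun n =>
      abs_of_pos (by positivity)
    simp only [habs]
    exact tendsto_one_div_add_atTop_nhds_zero_nat
  have hd := X.tendsto_const_indicator (fun n => (1 / ((n : ℝ) + 1)) • w₀) A hAmeas hAfin hdnorm
  obtain ⟨n₀, hn₀⟩ := (hd.eventually_lt_const hε₅).exists
  set lA : ℝ := 1 / ((n₀ : ℝ) + 1) with hlAdef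
  have hlApos : 0 < lA := by positivity
  have hlA_Fn : X.Fn (A.indicator fun _ => lA • w₀) < ε₅ := hn₀
  -- the constants
  set c : ℝ≥0∞ := ENNReal.ofReal lA * η₁ with hcdef
  have hc0 : c ≠ 0 := by
    refine mul_ne_zero ?_ hη₁pos.ne'
    simp [ENNReal.ofReal_pos.2 hlApos, (ENNReal.ofReal_pos.2 hlApos).ne']
  have hcT : c ≠ ⊤ := ENNReal.mul_ne_top ENNReal.ofReal_ne_top hη₁top
  set c4 : ℝ≥0∞ := c / 2 / 2 with hc4def
  have hc40 : c4 ≠ 0 := by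
    rw [hc4def]
    intro hcon
    rcases ENNReal.div_eq_zero_iff.1 hcon with h | h
    · rcases ENNReal.div_eq_zero_iff.1 h with h2 | h2
      · exact hc0 h2
      · simp at h2
    · simp at h
  have hc4T : c4 ≠ ⊤ := by
    have h1 : c4 ≤ c := le_trans ENNReal.half_le_self ENNReal.half_le_self
    exact ne_top_of_le_ne_top hcT h1
  have hc4R : 0 < c4.toReal := ENNReal.toReal_pos hc40 hc4T
  set aR : ℝ := (μ A).toReal with haRdef
  have haR0 : 0 ≤ aR := ENNReal.toReal_nonneg
  set δ : ℝ := min 1 (c4.toReal / (aR + 1)) with hδdef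
  have hδpos : 0 < δ := lt_min one_pos (by positivity)
  set η : ℝ := min 1 (c4.toReal / (2 * M)) with hηdef
  have hηpos : 0 < η := lt_min one_pos (by positivity)
  -- Step D : uniform control of deviation measure by the F-norm
  obtain ⟨δ', hδ'pos, hδ'⟩ := X.exists_Fn_measure_control hAmeas hw₀
    (show (0 : ℝ) < δ / 2 by positivity) hηpos
  -- the finite net
  obtain ⟨s, hsK, hnet⟩ := X.totallyBounded hKc hδ'pos
  set m : ℕ := s.card with hmdef
  set p : Fin m → T → W := fun i => ((s.equivFin.symm i : {x // x ∈ s}) : T → W) with hpdef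
  have hpK : ∀ i, p i ∈ K := fun i => hsK (s.equivFin.symm i).2
  have hnet' : ∀ f ∈ K, ∃ i : Fin m, X.Fn (f - p i) < δ' := by
    intro f hf
    obtain ⟨g, hgs, hglt⟩ := hnet f hf
    refine ⟨s.equivFin ⟨g, hgs⟩, ?_⟩
    have : p (s.equivFin ⟨g, hgs⟩) = g := by
      simp [hpdef]
    rwa [this]
  -- measurable representatives of the net points
  set ghat : Fin m → T → W := fun i => (X.measurable_mem (p i) (hK (hpK i))).mk (p i)
    with hghatdef
  have hghat_sm : ∀ i, StronglyMeasurable (ghat i) := fun i =>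
    (X.measurable_mem (p i) (hK (hpK i))).stronglyMeasurable_mk
  have hghat_eq : ∀ i, p i =ᵐ[μ] ghat i := fun i =>
    (X.measurable_mem (p i) (hK (hpK i))).ae_eq_mk
  have hghat_mem : ∀ i, ghat i ∈ X.carrier := fun i =>
    (X.mono (ghat i) (p i) (hghat_sm i).aestronglyMeasurable (hK (hpK i))
      ((hghat_eq i).mono fun t ht => le_of_eq (by rw [ht]))).1
  -- the building blocks
  set q : Fin m → T → W := fun i => A.indicator (fun t => trunc M (ghat i t)) with hqdef
  have hq_sm : ∀ i, StronglyMeasurable (q i) := fun i =>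
    ((trunc_continuous hM0).comp_stronglyMeasurable (hghat_sm i)).indicator hAmeas
  have hq_normM : ∀ i t, ‖q i t‖ ≤ M := by
    intro i t
    refine le_trans (norm_indicator_le_norm_self _ t) (norm_trunc_le hM0.le _)
  have hq_mem : ∀ i, q i ∈ X.carrier := by
    intro i
    refine (X.mono (q i) (ghat i) (hq_sm i).aestronglyMeasurable (hghat_mem i)
      (Filter.Eventually.of_forall fun t => ?_)).1
    exact le_trans (norm_indicator_le_norm_self _ t) (norm_trunc_le_norm hM0.le _)
  -- the partition-of-unity coefficients
  set lam : (T → W) → Fin m → ℝ := fun g i => max 0 (δ' - X.Fn (g - p i)) with hlamdef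
  set Lam : (T → W) → ℝ := fun g => ∑ i, lam g i with hLamdef
  have hlam_nonneg : ∀ g i, 0 ≤ lam g i := fun g i => le_max_left _ _
  have hLam_pos : ∀ f ∈ K, 0 < Lam f := by
    intro f hf
    obtain ⟨i, hi⟩ := hnet' f hf
    exact Finset.sum_pos' (fun j _ => hlam_nonneg f j)
      ⟨i, Finset.mem_univ i, lt_max_of_lt_right (by linarith)⟩
  set coef : (T → W) → Fin m → ℝ := fun g i => lam g i / Lam g with hcoefdef
  have hcoef_nonneg : ∀ g i, 0 ≤ coef g i := fun g i =>
    div_nonneg (hlam_nonneg g i) (Finset.sum_nonneg fun j _ => hlam_nonneg g j)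
  have hcoef_sum : ∀ f ∈ K, ∑ i, coef f i = 1 := by
    intro f hf
    rw [hcoefdef]
    simp only
    rw [← Finset.sum_div]
    exact div_self (hLam_pos f hf).ne'
  have hcoef_active : ∀ f ∈ K, ∀ i, coef f i ≠ 0 → X.Fn (f - p i) < δ' := by
    intro f hf i hne
    by_contra hge
    push_neg at hge
    apply hne
    have hl0 : lam f i = 0 := max_eq_left (by linarith)
    simp [hcoefdef, hl0]
  set H : (T → W) → T → W := fun g => ∑ i, coef g i • q i with hHdef
  have hHmem : ∀ f, H f ∈ X.carrier := by
    intro f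
    refine Finset.sum_induction _ (· ∈ X.carrier) (fun a b ha hb => X.add_mem a b ha hb)
      X.zero_mem (fun i _ => X.smul_mem _ _ (hq_mem i))
  refine ⟨H, fun f _ => hHmem f, ?_, ⟨m, q, fun f _ => Submodule.sum_mem _
    fun i _ => Submodule.smul_mem _ _ (Submodule.subset_span ⟨i, rfl⟩)⟩, ?_⟩
  · -- continuity of `H` on `K`
    intro f hf fs hfs hconv
    have hcont_lam : ∀ i, Filter.Tendsto (fun n => lam (fs n) i) Filter.atTop (𝓝 (lam f i)) := by
      intro i
      have hFni : Filter.Tendsto (fun n => X.Fn (fs n - p i)) Filter.atTop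
          (𝓝 (X.Fn (f - p i))) := by
        have hsq : Filter.Tendsto (fun n => X.Fn (fs n - p i) - X.Fn (f - p i))
            Filter.atTop (𝓝 0) :=
          squeeze_zero_norm (fun n => X.abs_Fn_sub_le (fs n) f (p i)) hconv
        have := hsq.add_const (X.Fn (f - p i))
        simpa using this
      exact tendsto_const_nhds.max (tendsto_const_nhds.sub hFni)
    have hcont_Lam : Filter.Tendsto (fun n => Lam (fs n)) Filter.atTop (𝓝 (Lam f)) :=
      tendsto_finset_sum _ fun i _ => hcont_lam i
    have hcont_coef : ∀ i, Filter.Tendsto (fun n => coef (fs n) i) Filter.atTop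
        (𝓝 (coef f i)) := fun i => (hcont_lam i).div hcont_Lam (hLam_pos f hf).ne'
    have hterm : ∀ i : Fin m, Filter.Tendsto
        (fun n => X.Fn (coef (fs n) i • q i - coef f i • q i)) Filter.atTop (𝓝 0) := by
      intro i
      refine X.Fn_smul (q i) (fun _ => q i) (coef f i) (fun n => coef (fs n) i) ?_
        (hcont_coef i)
      simpa [X.Fn_zero] using (tendsto_const_nhds :
        Filter.Tendsto (fun _ : ℕ => (0 : ℝ)) Filter.atTop (𝓝 0))
    have hle : ∀ n, X.Fn (H (fs n) - H f) ≤
        ∑ i, X.Fn (coef (fs n) i • q i - coef f i • q i) := by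
      intro n
      have hdec : H (fs n) - H f = ∑ i, (coef (fs n) i • q i - coef f i • q i) := by
        rw [hHdef]
        simp only
        rw [Finset.sum_sub_distrib]
      rw [hdec]
      exact X.Fn_sum_le _ _
    have hsum0 : Filter.Tendsto
        (fun n => ∑ i, X.Fn (coef (fs n) i • q i - coef f i • q i)) Filter.atTop (𝓝 0) := by
      have := tendsto_finset_sum (Finset.univ : Finset (Fin m)) fun i _ => hterm i
      simpa using this
    exact squeeze_zero (fun n => X.Fn_nonneg _) hle hsum0
  · -- the approximation estimate
    intro f hf
    have hfc : f ∈ X.carrier := hK hf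
    have hfm : AEStronglyMeasurable f μ := X.measurable_mem f hfc
    set fhat : T → W := hfm.mk f with hfhatdef
    have hfhat_sm : StronglyMeasurable fhat := hfm.stronglyMeasurable_mk
    have hfhat_eq : f =ᵐ[μ] fhat := hfm.ae_eq_mk
    have hfhat_mem : fhat ∈ X.carrier :=
      (X.mono fhat f hfhat_sm.aestronglyMeasurable hfc
        (hfhat_eq.mono fun t ht => le_of_eq (by rw [ht]))).1
    set τ : T → W := A.indicator (fun t => trunc M (fhat t)) with hτdef
    have hτ_sm : StronglyMeasurable τ :=
      ((trunc_continuous hM0).comp_stronglyMeasurable hfhat_sm).indicator hAmeas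
    have hτ_normM : ∀ t, ‖τ t‖ ≤ M := fun t =>
      le_trans (norm_indicator_le_norm_self _ t) (norm_trunc_le hM0.le _)
    -- part 1 : `Fn (f - τ) < 2 ε₅`
    have htrf_mem : (f - fun t => trunc M (f t)) ∈ X.carrier := by
      refine (X.mono _ f (hfm.sub ((trunc_continuous hM0).comp_aestronglyMeasurable hfm))
        hfc (Filter.Eventually.of_forall fun t => ?_)).1
      simp only [Pi.sub_apply]
      rw [norm_sub_trunc hM0.le]
      exact max_le (norm_nonneg _) (by linarith [norm_nonneg (f t), hM0])
    have h1 : X.Fn (f - τ) ≤ X.Fn (Aᶜ.indicator f) +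
        X.Fn (f - fun t => trunc M (f t)) := by
      refine (X.split (hfm.sub hτ_sm.aestronglyMeasurable)
        (X.indicator_restrict_mem hfc hAmeas.compl).1 htrf_mem ?_).2
      filter_upwards [hfhat_eq] with t ht
      by_cases htA : t ∈ A
      · have hτt : τ t = trunc M (f t) := by
          rw [hτdef, Set.indicator_of_mem htA, ← ht]
        have hAc : Aᶜ.indicator f t = 0 := Set.indicator_of_notMem (by simpa using htA) f
        simp only [Pi.sub_apply, hτt, hAc, norm_zero, zero_add]
        exact le_rfl
      · have hτt : τ t = 0 := Set.indicator_of_notMem htA _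
        have hAc : Aᶜ.indicator f t = f t := Set.indicator_of_mem (by simpa using htA) f
        simp only [Pi.sub_apply, hτt, hAc, sub_zero]
        linarith [norm_nonneg (f t - trunc M (f t))]
    -- Step D applied to the active indices
    set D : Fin m → Set T := fun i => {t | t ∈ A ∧ δ / 2 < ‖fhat t - ghat i t‖} with hDdef
    have hDmeas : ∀ i, MeasurableSet (D i) := by
      intro i
      have hmeas : Measurable fun t => ‖fhat t - ghat i t‖ :=
        (hfhat_sm.sub (hghat_sm i)).norm.measurable
      exact hAmeas.inter (measurableSet_lt measurable_const hmeas)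
    have hDi : ∀ i, coef f i ≠ 0 → μ (D i) < ENNReal.ofReal η := by
      intro i hi
      have h2 : X.Fn (fhat - ghat i) ≤ X.Fn (f - p i) := by
        refine (X.mono _ _ (hfhat_sm.sub (hghat_sm i)).aestronglyMeasurable
          (X.sub_mem hfc (hK (hpK i))) ?_).2
        filter_upwards [hfhat_eq, hghat_eq i] with t ht1 ht2
        simp only [Pi.sub_apply, ← ht1, ← ht2]
        exact le_rfl
      exact hδ' fhat (ghat i) hfhat_mem (hghat_mem i)
        (lt_of_le_of_lt h2 (hcoef_active f hf i hi))
    -- the per-index integral bound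
    have hIi : ∀ i, coef f i ≠ 0 →
        ∫⁻ t, ENNReal.ofReal ‖τ t - q i t‖ ∂μ ≤ c / 2 := by
      intro i hi
      have hpt : ∀ t, ENNReal.ofReal ‖τ t - q i t‖ ≤
          (D i).indicator (fun _ => ENNReal.ofReal (2 * M)) t +
          A.indicator (fun _ => ENNReal.ofReal δ) t := by
        intro t
        by_cases htA : t ∈ A
        · by_cases htD : t ∈ D i
          · rw [Set.indicator_of_mem htD]
            refine le_trans ?_ le_self_add
            apply ENNReal.ofReal_le_ofReal
            calc ‖τ t - q i t‖ ≤ ‖τ t‖ + ‖q i t‖ := norm_sub_le _ _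
            _ ≤ M + M := add_le_add (hτ_normM t) (hq_normM i t)
            _ = 2 * M := by ring
          · rw [Set.indicator_of_notMem htD, Set.indicator_of_mem htA, zero_add]
            apply ENNReal.ofReal_le_ofReal
            have hnd : ‖fhat t - ghat i t‖ ≤ δ / 2 := by
              by_contra hnd
              push_neg at hnd
              exact htD ⟨htA, hnd⟩
            have hττ : τ t = trunc M (fhat t) := by
              rw [hτdef, Set.indicator_of_mem htA]
            have hqq : q i t = trunc M (ghat i t) := by
              rw [hqdef]
              simp only
              rw [Set.indicator_of_mem htA]
            rw [hττ, hqq]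
            calc ‖trunc M (fhat t) - trunc M (ghat i t)‖
                ≤ 2 * ‖fhat t - ghat i t‖ := trunc_lipschitz hM0.le _ _
            _ ≤ 2 * (δ / 2) := by linarith
            _ = δ := by ring
        · have hττ : τ t = 0 := Set.indicator_of_notMem htA _
          have hqq : q i t = 0 := by
            rw [hqdef]
            simp only
            rw [Set.indicator_of_notMem htA]
          rw [hττ, hqq]
          simp
      calc ∫⁻ t, ENNReal.ofReal ‖τ t - q i t‖ ∂μ
          ≤ ∫⁻ t, ((D i).indicator (fun _ => ENNReal.ofReal (2 * M)) t +
            A.indicator (fun _ => ENNReal.ofReal δ) t) ∂μ := lintegral_mono hpt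
      _ = ENNReal.ofReal (2 * M) * μ (D i) + ENNReal.ofReal δ * μ A := by
          rw [lintegral_add_left (measurable_const.indicator (hDmeas i)),
            lintegral_indicator_const (hDmeas i), lintegral_indicator_const hAmeas]
      _ ≤ c4 + c4 := by
          gcongr
          · -- `ofReal (2M) * μ (D i) ≤ c4`
            calc ENNReal.ofReal (2 * M) * μ (D i)
                ≤ ENNReal.ofReal (2 * M) * ENNReal.ofReal η :=
                  mul_le_mul_right (hDi i hi).le _
            _ = ENNReal.ofReal (2 * M * η) := (ENNReal.ofReal_mul (by positivity)).symm
            _ ≤ ENNReal.ofReal c4.toReal := by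
                apply ENNReal.ofReal_le_ofReal
                have hle : η ≤ c4.toReal / (2 * M) := min_le_right _ _
                calc 2 * M * η ≤ 2 * M * (c4.toReal / (2 * M)) := by nlinarith
                _ = c4.toReal := by field_simp
            _ = c4 := ENNReal.ofReal_toReal hc4T
          · -- `ofReal δ * μ A ≤ c4`
            have hμA : μ A = ENNReal.ofReal aR := (ENNReal.ofReal_toReal hAfin.ne).symm
            calc ENNReal.ofReal δ * μ A = ENNReal.ofReal δ * ENNReal.ofReal aR := by rw [hμA]
            _ = ENNReal.ofReal (δ * aR) := (ENNReal.ofReal_mul hδpos.le).symm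
            _ ≤ ENNReal.ofReal c4.toReal := by
                apply ENNReal.ofReal_le_ofReal
                have hle : δ ≤ c4.toReal / (aR + 1) := min_le_right _ _
                have h2 : c4.toReal / (aR + 1) * aR ≤ c4.toReal := by
                  rw [div_mul_eq_mul_div, div_le_iff₀ (by positivity : (0:ℝ) < aR + 1)]
                  nlinarith
                calc δ * aR ≤ c4.toReal / (aR + 1) * aR := by nlinarith
                _ ≤ c4.toReal := h2
            _ = c4 := ENNReal.ofReal_toReal hc4T
      _ = c / 2 := by
          rw [hc4def]
          exact ENNReal.add_halves _
    -- the Markov estimate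
    set φf : T → ℝ := fun t => ∑ i, coef f i * ‖τ t - q i t‖ with hφfdef
    have hφf_meas : Measurable φf := by
      apply Finset.measurable_sum
      intro i _
      exact ((hτ_sm.sub (hq_sm i)).norm.measurable).const_mul _
    set E : Set T := {t | lA < φf t} with hEdef
    have hEmeas : MeasurableSet E := measurableSet_lt measurable_const hφf_meas
    have hlint : ∫⁻ t, ENNReal.ofReal (φf t) ∂μ ≤ c / 2 := by
      have heq : ∀ t, ENNReal.ofReal (φf t) =
          ∑ i, ENNReal.ofReal (coef f i) * ENNReal.ofReal ‖τ t - q i t‖ := by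
        intro t
        rw [hφfdef]
        simp only
        rw [ENNReal.ofReal_sum_of_nonneg
          (fun i _ => mul_nonneg (hcoef_nonneg f i) (norm_nonneg _))]
        exact Finset.sum_congr rfl fun i _ => ENNReal.ofReal_mul (hcoef_nonneg f i)
      have hmeas2 : ∀ i : Fin m, Measurable fun t =>
          ENNReal.ofReal (coef f i) * ENNReal.ofReal ‖τ t - q i t‖ := by
        intro i
        exact (ENNReal.measurable_ofReal.comp (hτ_sm.sub (hq_sm i)).norm.measurable).const_mul _
      calc ∫⁻ t, ENNReal.ofReal (φf t) ∂μ
          = ∑ i, ∫⁻ t, ENNReal.ofReal (coef f i) * ENNReal.ofReal ‖τ t - q i t‖ ∂μ := by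
            simp_rw [heq]
            exact lintegral_finset_sum _ fun i _ => hmeas2 i
      _ = ∑ i, ENNReal.ofReal (coef f i) * ∫⁻ t, ENNReal.ofReal ‖τ t - q i t‖ ∂μ :=
            Finset.sum_congr rfl fun i _ => lintegral_const_mul _
              (ENNReal.measurable_ofReal.comp (hτ_sm.sub (hq_sm i)).norm.measurable)
      _ ≤ ∑ i, ENNReal.ofReal (coef f i) * (c / 2) := by
            refine Finset.sum_le_sum fun i _ => ?_
            rcases eq_or_ne (coef f i) 0 with h0 | h0
            · simp [h0]
            · exact mul_le_mul_right (hIi i h0) _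
      _ = ENNReal.ofReal (∑ i, coef f i) * (c / 2) := by
            rw [ENNReal.ofReal_sum_of_nonneg (fun i _ => hcoef_nonneg f i), Finset.sum_mul]
      _ = c / 2 := by rw [hcoef_sum f hf, ENNReal.ofReal_one, one_mul]
    have hμE : μ E < η₁ := by
      have hmark := mul_meas_ge_le_lintegral₀ (μ := μ)
        ((ENNReal.measurable_ofReal.comp hφf_meas).aemeasurable) (ENNReal.ofReal lA)
      have hEsub : E ⊆ {t | ENNReal.ofReal lA ≤ ENNReal.ofReal (φf t)} := fun t ht =>
        ENNReal.ofReal_le_ofReal (le_of_lt ht)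
      have h1 : ENNReal.ofReal lA * μ E ≤ c / 2 :=
        le_trans (mul_le_mul_right (measure_mono hEsub) _) (le_trans hmark hlint)
      by_contra hge
      push_neg at hge
      have h2 : c ≤ ENNReal.ofReal lA * μ E := by
        rw [hcdef]
        exact mul_le_mul_right hge _
      have h3 : c < c := lt_of_le_of_lt (h2.trans h1) (ENNReal.half_lt_self hc0 hcT)
      exact absurd h3 (lt_irrefl c)
    have hμE1 : μ E < ⊤ := lt_of_lt_of_le hμE (le_trans (min_le_right _ _) le_top)
    -- part 2 : `Fn (τ - H f) < 2 ε₅`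
    have hident : τ - H f = ∑ i, coef f i • (τ - q i) := by
      simp_rw [smul_sub]
      rw [Finset.sum_sub_distrib, ← Finset.sum_smul, hcoef_sum f hf, one_smul]
    have hptw : ∀ t, ‖τ t - H f t‖ ≤ φf t := by
      intro t
      have h0 : τ t - H f t = (τ - H f) t := rfl
      rw [h0, hident, Finset.sum_apply]
      refine le_trans (norm_sum_le _ _) (Finset.sum_le_sum fun i _ => ?_)
      rw [Pi.smul_apply, Pi.sub_apply, norm_smul, Real.norm_eq_abs,
        abs_of_nonneg (hcoef_nonneg f i)]
    have hHfbound : ∀ t, ‖H f t‖ ≤ M := by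
      intro t
      have h0 : H f t = ∑ i, coef f i • q i t := by
        rw [hHdef]
        simp only
        rw [Finset.sum_apply]
        rfl
      rw [h0]
      refine le_trans (norm_sum_le _ _) ?_
      calc ∑ i, ‖coef f i • q i t‖ = ∑ i, coef f i * ‖q i t‖ := by
            refine Finset.sum_congr rfl fun i _ => ?_
            rw [norm_smul, Real.norm_eq_abs, abs_of_nonneg (hcoef_nonneg f i)]
      _ ≤ ∑ i, coef f i * M := Finset.sum_le_sum fun i _ =>
            mul_le_mul_of_nonneg_left (hq_normM i t) (hcoef_nonneg f i)
      _ = M := by rw [← Finset.sum_mul, hcoef_sum f hf, one_mul]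
    have h2 : X.Fn (τ - H f) ≤ X.Fn (A.indicator fun _ => lA • w₀) +
        X.Fn (E.indicator fun _ => (2 * M) • w₀) := by
      refine (X.split (hτ_sm.aestronglyMeasurable.sub (X.measurable_mem _ (hHmem f)))
        (X.indicator_mem hAmeas hAfin _) (X.indicator_mem hEmeas hμE1 _)
        (Filter.Eventually.of_forall fun t => ?_)).2
      by_cases htE : t ∈ E
      · have hRHS : ‖E.indicator (fun _ => (2 * M) • w₀) t‖ = 2 * M := by
          rw [Set.indicator_of_mem htE, norm_smul, hw₀, mul_one, Real.norm_eq_abs,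
            abs_of_pos (by positivity)]
        calc ‖(τ - H f) t‖ = ‖τ t - H f t‖ := rfl
        _ ≤ ‖τ t‖ + ‖H f t‖ := norm_sub_le _ _
        _ ≤ M + M := add_le_add (hτ_normM t) (hHfbound t)
        _ = 2 * M := by ring
        _ ≤ _ := by
            rw [hRHS]
            exact le_add_of_nonneg_left (norm_nonneg _)
      · by_cases htA : t ∈ A
        · have hφle : φf t ≤ lA := not_lt.1 htE
          have hRHS : ‖A.indicator (fun _ => lA • w₀) t‖ = lA := by
            rw [Set.indicator_of_mem htA, norm_smul, hw₀, mul_one, Real.norm_eq_abs,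
              abs_of_pos hlApos]
          calc ‖(τ - H f) t‖ = ‖τ t - H f t‖ := rfl
          _ ≤ φf t := hptw t
          _ ≤ lA := hφle
          _ ≤ _ := by
              rw [hRHS]
              exact le_add_of_nonneg_right (norm_nonneg _)
        · have hττ : τ t = 0 := Set.indicator_of_notMem htA _
          have hqq : ∀ i : Fin m, q i t = 0 := fun i => by
            rw [hqdef]
            simp only
            rw [Set.indicator_of_notMem htA]
          have hHf0 : H f t = 0 := by
            have h0 : H f t = ∑ i, coef f i • q i t := by
              rw [hHdef]
              simp only
              rw [Finset.sum_apply]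
              rfl
            rw [h0]
            simp [hqq]
          have : ‖(τ - H f) t‖ = 0 := by
            simp only [Pi.sub_apply, hττ, hHf0, sub_zero, norm_zero]
          rw [this]
          positivity
    -- conclusion
    have hE_Fn : X.Fn (E.indicator fun _ => (2 * M) • w₀) < ε₅ :=
      hη₀ E hEmeas (lt_of_lt_of_le hμE (min_le_left _ _))
    have hAc_Fn : X.Fn (Aᶜ.indicator f) < ε₅ := hA_tail f hf
    have htr_Fn : X.Fn (f - fun t => trunc M (f t)) < ε₅ := hMtr f hf
    have hfinal : X.Fn (f - H f) ≤ X.Fn (f - τ) + X.Fn (τ - H f) := X.Fn_sub_le3 _ _ _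
    have : X.Fn (f - H f) < 4 * ε₅ := by
      have := hfinal
      linarith [h1, h2, hE_Fn, hAc_Fn, htr_Fn, hlA_Fn]
    calc X.Fn (f - H f) < 4 * ε₅ := this
    _ < ε := by rw [hε₅def]; linarith
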